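/- Let G be a simple connected non-complete graph on n ≥ 4 vertices with normalized Laplacian eigenvalues λ_1 ≥ ... ≥ λ_{n-1} > 0 = λ_n. Suppose λ_1 ≥ θ, λ_2 ≥ β, θ ≥ β, and θ + β(n-2) > n. If 0 < α < 1, then ∑_{i=1}^{n-1} λ_i^α ≤ θ^α + β^α + (n-θ-β)^α/(n-3)^{α-1}. -/

import Mathlib

open Matrix Finset

/-- The normalized Laplacian `D^{-1/2} (D - A) D^{-1/2}` of a simple graph. -/
noncomputable def normLap {n : ℕ} (G : SimpleGraph (Fin n)) [DecidableRel G.Adj] :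
    Matrix (Fin n) (Fin n) ℝ :=
  let Dinvhalf : Matrix (Fin n) (Fin n) ℝ :=
    Matrix.diagonal fun i => (Real.sqrt (G.degree i))⁻¹
  Dinvhalf * (Matrix.diagonal (fun i => (G.degree i : ℝ)) - G.adjMatrix ℝ) * Dinvhalf

private lemma tangent_rpow {α x y : ℝ} (hα1 : 0 < α) (hα2 : α < 1) (hy : 0 < y) (hx : 0 ≤ x) :
    x ^ α ≤ y ^ α + α * y ^ (α - 1) * (x - y) := by
  have hs : (-1 : ℝ) ≤ (x - y) / y := by
    rw [le_div_iff₀ hy]; linarith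
  have h := rpow_one_add_le_one_add_mul_self hs hα1.le hα2.le
  have hxy : 1 + (x - y) / y = x / y := by field_simp; ring
  rw [hxy, Real.div_rpow hx hy.le] at h
  have hyα : (0:ℝ) < y ^ α := Real.rpow_pos_of_pos hy α
  rw [div_le_iff₀ hyα] at h
  rw [Real.rpow_sub_one hy.ne' α]
  calc x ^ α ≤ (1 + α * ((x - y) / y)) * y ^ α := h
    _ = y ^ α + α * (y ^ α / y) * (x - y) := by field_simp

private lemma transfer_rpow {α c s t y Y : ℝ} (hα1 : 0 < α) (hα2 : α < 1) (hc : 0 < c)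
    (hs : 0 < s) (hst : s ≤ t) (hty : t ≤ y) (hyY : y ≤ Y)
    (heq : Y - y = c * (t - s)) :
    Y ^ α + c * s ^ α ≤ y ^ α + c * t ^ α := by
  have ht : 0 < t := lt_of_lt_of_le hs hst
  have hy : 0 < y := lt_of_lt_of_le ht hty
  have h1 : Y ^ α ≤ y ^ α + α * y ^ (α - 1) * (Y - y) :=
    tangent_rpow hα1 hα2 hy (le_trans hy.le hyY)
  have h2 : s ^ α ≤ t ^ α + α * t ^ (α - 1) * (s - t) :=
    tangent_rpow hα1 hα2 ht hs.le
  have h2' : c * s ^ α ≤ c * (t ^ α + α * t ^ (α - 1) * (s - t)) :=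
    mul_le_mul_of_nonneg_left h2 hc.le
  have h3 : y ^ (α - 1) ≤ t ^ (α - 1) :=
    Real.rpow_le_rpow_of_nonpos ht hty (by linarith)
  have h4 : c * (s - t) = -(Y - y) := by linarith
  have h5 : α * y ^ (α - 1) * (Y - y) + c * (α * t ^ (α - 1) * (s - t)) ≤ 0 := by
    have h6 : α * y ^ (α - 1) * (Y - y) + c * (α * t ^ (α - 1) * (s - t))
        = α * (Y - y) * (y ^ (α - 1) - t ^ (α - 1)) := by
      have h7 : c * (α * t ^ (α - 1) * (s - t)) = α * t ^ (α - 1) * (c * (s - t)) := by ring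
      rw [h7, h4]; ring
    rw [h6]
    apply mul_nonpos_of_nonneg_of_nonpos
    · have : 0 ≤ Y - y := by linarith
      positivity
    · linarith
  rw [mul_add] at h2'
  linarith [h1, h2', h5]

private lemma sum_rpow_le_card_mul {ι : Type*} (F : Finset ι) (f : ι → ℝ) {α : ℝ}
    (hα1 : 0 < α) (hα2 : α < 1) (hf : ∀ i ∈ F, 0 ≤ f i) (hF : F.Nonempty) :
    ∑ i ∈ F, f i ^ α ≤ (F.card : ℝ) * ((∑ i ∈ F, f i) / F.card) ^ α := by
  have hm : (0:ℝ) < F.card := by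
    have := Finset.card_pos.mpr hF
    exact_mod_cast this
  have hp : (1:ℝ) ≤ 1 / α := by
    rw [le_div_iff₀ hα1]; linarith
  have h := Real.arith_mean_le_rpow_mean F (fun _ => 1 / (F.card : ℝ)) (fun i => f i ^ α)
    (fun i _ => by positivity) (by
      rw [Finset.sum_const, nsmul_eq_mul]
      field_simp)
    (fun i hi => Real.rpow_nonneg (hf i hi) α) hp
  rw [one_div_one_div] at h
  have hz : ∑ i ∈ F, 1 / (F.card : ℝ) * (f i ^ α) ^ (1 / α) = ∑ i ∈ F, 1 / (F.card : ℝ) * f i :=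
    Finset.sum_congr rfl (fun i hi => by
      rw [← Real.rpow_mul (hf i hi), mul_one_div_cancel hα1.ne', Real.rpow_one])
  rw [hz, ← Finset.mul_sum, ← Finset.mul_sum] at h
  have hbase : 1 / (F.card : ℝ) * ∑ i ∈ F, f i = (∑ i ∈ F, f i) / F.card := by ring
  rw [hbase] at h
  calc ∑ i ∈ F, f i ^ α = (F.card : ℝ) * (1 / (F.card : ℝ) * ∑ i ∈ F, f i ^ α) := by
        field_simp
    _ ≤ (F.card : ℝ) * ((∑ i ∈ F, f i) / F.card) ^ α := mul_le_mul_of_nonneg_left h hm.le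

private lemma trace_eq_sum_eig {n : ℕ} (A : Matrix (Fin n) (Fin n) ℝ) (hA : A.IsHermitian) :
    ∑ i, hA.eigenvalues i = A.trace := by
  rw [hA.trace_eq_sum_eigenvalues]
  simp

private lemma trace_normLap {n : ℕ} (hn : 2 ≤ n) (G : SimpleGraph (Fin n)) [DecidableRel G.Adj]
    (hG : G.Connected) : (normLap G).trace = n := by
  have hdeg : ∀ i : Fin n, 0 < G.degree i := by
    intro i
    rw [G.degree_pos_iff_exists_adj]
    have hne : ∃ j : Fin n, j ≠ i := by
      by_cases h0 : i.val = 0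
      · exact ⟨⟨1, by omega⟩, by simp [Fin.ext_iff]; omega⟩
      · exact ⟨⟨0, by omega⟩, by simp [Fin.ext_iff]; omega⟩
    obtain ⟨j, hj⟩ := hne
    obtain ⟨w⟩ := hG.preconnected i j
    cases w with
    | nil => exact absurd rfl hj.symm
    | cons h p => exact ⟨_, h⟩
  unfold normLap
  simp only [Matrix.trace, Matrix.diag, Matrix.mul_diagonal, Matrix.diagonal_mul,
    Matrix.sub_apply, Matrix.diagonal_apply_eq, SimpleGraph.adjMatrix_apply]
  have : ∀ i : Fin n,
      (Real.sqrt (G.degree i))⁻¹ * ((G.degree i : ℝ) - if G.Adj i i then 1 else 0) *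
        (Real.sqrt (G.degree i))⁻¹ = 1 := by
    intro i
    have hdi : (0:ℝ) < G.degree i := by exact_mod_cast hdeg i
    have hsq : Real.sqrt (G.degree i) * Real.sqrt (G.degree i) = G.degree i :=
      Real.mul_self_sqrt hdi.le
    have hsne : Real.sqrt (G.degree i) ≠ 0 := by
      have := Real.sqrt_pos.mpr hdi
      linarith
    rw [if_neg (G.irrefl)]
    field_simp
    rw [sub_zero, Real.sq_sqrt hdi.le]
  rw [Finset.sum_congr rfl (fun i _ => this i)]
  simp

theorem sAlpha_upper_bound_two {n : ℕ} (hn : 4 ≤ n) (G : SimpleGraph (Fin n)) [DecidableRel G.Adj]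
    (hG : G.Connected) (hGnc : G ≠ ⊤) (hH : (normLap G).IsHermitian)
    (lam : Fin n → ℝ) (hanti : Antitone lam)
    (hperm : ∃ σ : Equiv.Perm (Fin n), lam = hH.eigenvalues ∘ σ)
    (hlast : lam ⟨n - 1, by omega⟩ = 0) (hpos : lam ⟨n - 2, by omega⟩ > 0)
    (θ β α : ℝ) (hθ1 : lam ⟨0, by omega⟩ ≥ θ) (hβ1 : lam ⟨1, by omega⟩ ≥ β)
    (hθβ : θ ≥ β) (hsum : θ + β * ((n : ℝ) - 2) > n)
    (hα1 : 0 < α) (hα2 : α < 1) :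
    (∑ i ∈ Finset.univ.filter (fun i : Fin n => (i : ℕ) < n - 1), lam i ^ α) ≤
      θ ^ α + β ^ α + ((n : ℝ) - θ - β) ^ α / ((n : ℝ) - 3) ^ (α - 1) := by
  have hn4 : (4:ℝ) ≤ (n:ℝ) := by exact_mod_cast hn
  set F : Finset (Fin n) := Finset.univ.filter (fun i : Fin n => (i : ℕ) < n - 1) with hF
  set F2 : Finset (Fin n) :=
    Finset.univ.filter (fun i : Fin n => 2 ≤ (i : ℕ) ∧ (i : ℕ) < n - 1) with hF2
  set i0 : Fin n := ⟨0, by omega⟩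
  set i1 : Fin n := ⟨1, by omega⟩
  -- positivity of lam on F
  have hlampos : ∀ i : Fin n, (i : ℕ) < n - 1 → 0 < lam i := by
    intro i hi
    have : i ≤ (⟨n - 2, by omega⟩ : Fin n) := by
      simp only [Fin.le_def]; omega
    exact lt_of_lt_of_le hpos (hanti this)
  -- total sum equals n
  have htotal : ∑ i : Fin n, lam i = n := by
    obtain ⟨σ, hσ⟩ := hperm
    rw [hσ]
    have : ∑ i : Fin n, (hH.eigenvalues ∘ σ) i = ∑ i : Fin n, hH.eigenvalues i :=
      Equiv.sum_comp σ hH.eigenvalues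
    rw [this, trace_eq_sum_eig _ hH, trace_normLap (by omega) G hG]
  have hsumF : ∑ i ∈ F, lam i = n := by
    have hsplit := Finset.sum_filter_add_sum_filter_not Finset.univ
      (fun i : Fin n => (i : ℕ) < n - 1) lam
    have hnot : Finset.univ.filter (fun i : Fin n => ¬ (i : ℕ) < n - 1)
        = {(⟨n - 1, by omega⟩ : Fin n)} := by
      ext i
      simp only [Finset.mem_filter, Finset.mem_univ, true_and, Finset.mem_singleton, Fin.ext_iff]
      omega
    rw [hnot, Finset.sum_singleton, hlast, add_zero] at hsplit
    rw [← hsplit] at htotal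
    exact htotal
  -- sum splitting
  have hFsplit : ∀ g : Fin n → ℝ, ∑ i ∈ F, g i = g i0 + g i1 + ∑ i ∈ F2, g i := by
    intro g
    have hFeq : F = insert i0 (insert i1 F2) := by
      ext i
      simp only [hF, hF2, Finset.mem_filter, Finset.mem_univ, true_and, Finset.mem_insert,
        Fin.ext_iff, i0, i1]
      omega
    have h1 : i1 ∉ F2 := by simp [hF2, i1]
    have h0 : i0 ∉ insert i1 F2 := by
      simp [hF2, i0, i1, Fin.ext_iff]
    rw [hFeq, Finset.sum_insert h0, Finset.sum_insert h1]
    ring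
  have hcard : (F2.card : ℝ) = (n:ℝ) - 3 := by
    have : F2 = Finset.Ico (⟨2, by omega⟩ : Fin n) ⟨n - 1, by omega⟩ := by
      ext i
      simp only [hF2, Finset.mem_filter, Finset.mem_univ, true_and, Finset.mem_Ico,
        Fin.le_def, Fin.lt_def]
    rw [this, Fin.card_Ico]
    push_cast [show 2 ≤ n - 1 by omega]
    ring_nf
    rw [Nat.cast_sub (by omega)]
    push_cast
    ring
  set A := lam i0 with hA
  set B := lam i1 with hB
  have hAB : B ≤ A := hanti (by simp [Fin.le_def, i0, i1])
  have hBpos : 0 < B := hlampos i1 (by simp [i1]; omega)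
  have hApos : 0 < A := hlampos i0 (by simp [i0]; omega)
  have hS2 : ∑ i ∈ F2, lam i = (n:ℝ) - A - B := by
    have := hFsplit lam
    rw [hsumF] at this
    linarith
  have hF2ne : F2.Nonempty := ⟨⟨2, by omega⟩, by simp [hF2]; omega⟩
  have hS2pos : 0 < (n:ℝ) - A - B := by
    rw [← hS2]
    apply Finset.sum_pos
    · intro i hi
      simp only [hF2, Finset.mem_filter, Finset.mem_univ, true_and] at hi
      exact hlampos i hi.2
    · exact hF2ne
  have hAn : A < (n:ℝ) := by linarith
  have hβpos : 0 < β := by nlinarith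
  have hθpos : 0 < θ := lt_of_lt_of_le hβpos hθβ
  set c : ℝ := (n:ℝ) - 3 with hc
  have hcpos : 0 < c := by rw [hc]; linarith
  set t0 : ℝ := ((n:ℝ) - θ - β) / c with ht0
  set s1 : ℝ := ((n:ℝ) - θ - B) / c with hs1
  set s2 : ℝ := ((n:ℝ) - A - B) / c with hs2
  have hs2pos : 0 < s2 := div_pos hS2pos hcpos
  have hs2s1 : s2 ≤ s1 := by
    rw [hs1, hs2]; gcongr
  have hs1t0 : s1 ≤ t0 := by
    rw [hs1, ht0]; gcongr
  have ht0β : t0 ≤ β := by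
    rw [ht0, div_le_iff₀ hcpos]; nlinarith
  have hs1pos : 0 < s1 := lt_of_lt_of_le hs2pos hs2s1
  have hT1 : B ^ α + c * s1 ^ α ≤ β ^ α + c * t0 ^ α := by
    apply transfer_rpow hα1 hα2 hcpos hs1pos hs1t0 ht0β hβ1
    rw [ht0, hs1]; field_simp; ring
  have hs1θ : s1 ≤ θ := le_trans hs1t0 (le_trans ht0β hθβ)
  have hT2 : A ^ α + c * s2 ^ α ≤ θ ^ α + c * s1 ^ α := by
    apply transfer_rpow hα1 hα2 hcpos hs2pos hs2s1 hs1θ hθ1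
    rw [hs1, hs2]; field_simp; ring
  have hstep1 : ∑ i ∈ F2, lam i ^ α ≤ c * s2 ^ α := by
    have h := sum_rpow_le_card_mul F2 lam hα1 hα2 (fun i hi => by
      simp only [hF2, Finset.mem_filter, Finset.mem_univ, true_and] at hi
      exact (hlampos i hi.2).le) hF2ne
    rw [hcard, hS2] at h
    rw [hs2]
    exact h
  have ht0pos : 0 < t0 := lt_of_lt_of_le hs1pos hs1t0
  have hxpos : 0 < (n:ℝ) - θ - β := by
    have hx : (n:ℝ) - θ - β = t0 * c := by rw [ht0]; field_simp
    rw [hx]; exact mul_pos ht0pos hcpos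
  have hfinal : c * t0 ^ α = ((n:ℝ) - θ - β) ^ α / c ^ (α - 1) := by
    have hcα : c ^ α ≠ 0 := (Real.rpow_pos_of_pos hcpos α).ne'
    rw [ht0, Real.div_rpow hxpos.le hcpos.le, Real.rpow_sub_one hcpos.ne' α]
    field_simp
  calc ∑ i ∈ F, lam i ^ α = A ^ α + B ^ α + ∑ i ∈ F2, lam i ^ α :=
        hFsplit (fun i => lam i ^ α)
    _ ≤ A ^ α + B ^ α + c * s2 ^ α := by linarith
    _ ≤ θ ^ α + B ^ α + c * s1 ^ α := by linarith
    _ ≤ θ ^ α + β ^ α + c * t0 ^ α := by linarith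
    _ = θ ^ α + β ^ α + ((n:ℝ) - θ - β) ^ α / c ^ (α - 1) := by rw [hfinal]
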